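/- With the fixed initial vectors, for every n ∈ ℕ the induced matrices satisfy Σ_{j≤m1,k≤m2} P^(n,1)_{jk} = 1 and Σ_{k≤m2,l≤m3} P^(n,2)_{kl} = 1; moreover, for every n ≥ 1, P^(n,1)1_{m2} = a and (P^(n,2))ᵀ1_{m2} = b. -/

import Mathlib

open Matrix Finset Real

noncomputable section

/-- The Hilbert projective (pseudo)metric on the positive orthant:
`d_H(u,v) = log((max_i u_i/v_i) · (max_j v_j/u_j))`. -/
def dH {m : ℕ} (u v : Fin m → ℝ) : ℝ :=
  Real.log ((⨆ i, u i / v i) * (⨆ j, v j / u j))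

/-- Birkhoff's ratio `γ(A) = max_{i,j,k,l} (A_{ik}A_{jl})/(A_{jk}A_{il})`. -/
def birkhoffGamma {n m : ℕ} (A : Matrix (Fin n) (Fin m) ℝ) : ℝ :=
  ⨆ p : (Fin n × Fin n) × Fin m × Fin m,
    A p.1.1 p.2.1 * A p.1.2 p.2.2 / (A p.1.2 p.2.1 * A p.1.1 p.2.2)

/-- Birkhoff's contraction coefficient `λ(A) = (√γ(A) − 1)/(√γ(A) + 1)`. -/
def birkhoffLambda {n m : ℕ} (A : Matrix (Fin n) (Fin m) ℝ) : ℝ :=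
  (Real.sqrt (birkhoffGamma A) - 1) / (Real.sqrt (birkhoffGamma A) + 1)

/-- The dual (Lagrangian) function for the sequentially composed OT problem with `M = 2`. -/
def dual2 {m1 m2 m3 : ℕ} (a : Fin m1 → ℝ) (b : Fin m3 → ℝ) (ε : ℝ)
    (C1 : Matrix (Fin m1) (Fin m2) ℝ) (C2 : Matrix (Fin m2) (Fin m3) ℝ)
    (f1 : Fin m1 → ℝ) (f2 : Fin m2 → ℝ) (f3 : Fin m3 → ℝ) : ℝ :=
  (∑ j, f1 j * a j) + (∑ l, f3 l * b l)
    - ε * ((∑ j, ∑ k, Real.exp ((f1 j - f2 k - C1 j k) / ε))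
      + ∑ k, ∑ l, Real.exp ((f2 k + f3 l - C2 k l) / ε))

/-- The matrix `diag(u) K diag(1/v)` induced by the first pair of Sinkhorn vectors. -/
def indMat1 {m1 m2 : ℕ} (u : Fin m1 → ℝ) (K : Matrix (Fin m1) (Fin m2) ℝ)
    (v : Fin m2 → ℝ) : Matrix (Fin m1) (Fin m2) ℝ :=
  Matrix.diagonal u * K * Matrix.diagonal (fun k => (v k)⁻¹)

/-- The matrix `diag(v) K diag(w)` induced by the second pair of Sinkhorn vectors. -/
def indMat2 {m2 m3 : ℕ} (v : Fin m2 → ℝ) (K : Matrix (Fin m2) (Fin m3) ℝ)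
    (w : Fin m3 → ℝ) : Matrix (Fin m2) (Fin m3) ℝ :=
  Matrix.diagonal v * K * Matrix.diagonal w

/-- **Normalization of the induced matrices** (Lem. 4.1): with the fixed initial vectors,
the entries of `P^{n,1}` and `P^{n,2}` each sum to `1` for all `n`, and their edge
marginals are exactly `a` and `b` for all `n ≥ 1`. -/
theorem sinkhorn_induced_matrices_normalized
    {m1 m2 m3 : ℕ} (hm1 : 0 < m1) (hm2 : 0 < m2) (hm3 : 0 < m3)
    (C1 : Matrix (Fin m1) (Fin m2) ℝ) (C2 : Matrix (Fin m2) (Fin m3) ℝ)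
    (hC1 : ∀ j k, 0 ≤ C1 j k) (hC2 : ∀ k l, 0 ≤ C2 k l)
    (a : Fin m1 → ℝ) (b : Fin m3 → ℝ)
    (ha : ∀ j, 0 < a j) (hb : ∀ l, 0 < b l)
    (hasum : ∑ j, a j = 1) (hbsum : ∑ l, b l = 1)
    (ε : ℝ) (hε : 0 < ε)
    (K1 : Matrix (Fin m1) (Fin m2) ℝ) (K2 : Matrix (Fin m2) (Fin m3) ℝ)
    (hK1 : ∀ j k, K1 j k = Real.exp (-C1 j k / ε))
    (hK2 : ∀ k l, K2 k l = Real.exp (-C2 k l / ε))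
    (u1 : ℕ → Fin m1 → ℝ) (u2 : ℕ → Fin m2 → ℝ) (u3 : ℕ → Fin m3 → ℝ)
    (hinit1 : u1 0 = fun _ => 1 / (∑ j, ∑ k, K1 j k))
    (hinit2 : u2 0 = fun _ => 1)
    (hinit3 : u3 0 = fun _ => 1 / (∑ k, ∑ l, K2 k l))
    (hrec2 : ∀ n, u2 (n+1) = fun k => Real.sqrt ((K1ᵀ *ᵥ u1 n) k / (K2 *ᵥ u3 n) k))
    (hrec1 : ∀ n, u1 (n+1) = fun j => a j / (K1 *ᵥ fun k => (u2 (n+1) k)⁻¹) j)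
    (hrec3 : ∀ n, u3 (n+1) = fun l => b l / (K2ᵀ *ᵥ u2 (n+1)) l) :
    (∀ n : ℕ,
      (∑ j, ∑ k, indMat1 (u1 n) K1 (u2 n) j k) = 1 ∧
      (∑ k, ∑ l, indMat2 (u2 n) K2 (u3 n) k l) = 1) ∧
    (∀ n : ℕ, 1 ≤ n →
      (indMat1 (u1 n) K1 (u2 n) *ᵥ fun _ => 1) = a ∧
      ((indMat2 (u2 n) K2 (u3 n))ᵀ *ᵥ fun _ => 1) = b) := by

  haveI : Nonempty (Fin m1) := Fin.pos_iff_nonempty.mp hm1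
  haveI : Nonempty (Fin m2) := Fin.pos_iff_nonempty.mp hm2
  haveI : Nonempty (Fin m3) := Fin.pos_iff_nonempty.mp hm3
  have hK1pos : ∀ j k, 0 < K1 j k := fun j k => (hK1 j k) ▸ Real.exp_pos _
  have hK2pos : ∀ k l, 0 < K2 k l := fun k l => (hK2 k l) ▸ Real.exp_pos _
  have hK1sum : 0 < ∑ j, ∑ k, K1 j k :=
    Finset.sum_pos (fun j _ => Finset.sum_pos (fun k _ => hK1pos j k) Finset.univ_nonempty)
      Finset.univ_nonempty
  have hK2sum : 0 < ∑ k, ∑ l, K2 k l :=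
    Finset.sum_pos (fun k _ => Finset.sum_pos (fun l _ => hK2pos k l) Finset.univ_nonempty)
      Finset.univ_nonempty
  -- positivity of the Sinkhorn vectors
  have hpos : ∀ n, (∀ j, 0 < u1 n j) ∧ (∀ k, 0 < u2 n k) ∧ (∀ l, 0 < u3 n l) := by
    intro n
    induction n with
    | zero =>
      refine ⟨fun j => ?_, fun k => ?_, fun l => ?_⟩
      · rw [hinit1]; exact one_div_pos.mpr hK1sum
      · rw [hinit2]; exact one_pos
      · rw [hinit3]; exact one_div_pos.mpr hK2sum
    | succ n ih =>
      obtain ⟨h1, h2, h3⟩ := ih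
      have hmv1 : ∀ k, 0 < (K1ᵀ *ᵥ u1 n) k := by
        intro k
        simp only [Matrix.mulVec, dotProduct, Matrix.transpose_apply]
        exact Finset.sum_pos (fun j _ => mul_pos (hK1pos j k) (h1 j)) Finset.univ_nonempty
      have hmv2 : ∀ k, 0 < (K2 *ᵥ u3 n) k := by
        intro k
        simp only [Matrix.mulVec, dotProduct]
        exact Finset.sum_pos (fun l _ => mul_pos (hK2pos k l) (h3 l)) Finset.univ_nonempty
      have h2' : ∀ k, 0 < u2 (n+1) k := by
        intro k
        rw [hrec2]
        exact Real.sqrt_pos.mpr (div_pos (hmv1 k) (hmv2 k))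
      have hmv3 : ∀ j, 0 < (K1 *ᵥ fun k => (u2 (n+1) k)⁻¹) j := by
        intro j
        simp only [Matrix.mulVec, dotProduct]
        exact Finset.sum_pos (fun k _ => mul_pos (hK1pos j k) (inv_pos.mpr (h2' k)))
          Finset.univ_nonempty
      have hmv4 : ∀ l, 0 < (K2ᵀ *ᵥ u2 (n+1)) l := by
        intro l
        simp only [Matrix.mulVec, dotProduct, Matrix.transpose_apply]
        exact Finset.sum_pos (fun k _ => mul_pos (hK2pos k l) (h2' k)) Finset.univ_nonempty
      refine ⟨fun j => ?_, h2', fun l => ?_⟩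
      · rw [hrec1]; exact div_pos (ha j) (hmv3 j)
      · rw [hrec3]; exact div_pos (hb l) (hmv4 l)
  -- entrywise formulas
  have hE1 : ∀ (u : Fin m1 → ℝ) (v : Fin m2 → ℝ) j k,
      indMat1 u K1 v j k = u j * K1 j k * (v k)⁻¹ := by
    intro u v j k
    simp [indMat1, Matrix.mul_diagonal, Matrix.diagonal_mul]
  have hE2 : ∀ (v : Fin m2 → ℝ) (w : Fin m3 → ℝ) k l,
      indMat2 v K2 w k l = v k * K2 k l * w l := by
    intro v w k l
    simp [indMat2, Matrix.mul_diagonal, Matrix.diagonal_mul]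
  -- marginals for n ≥ 1
  have hmarg1 : ∀ n, (indMat1 (u1 (n+1)) K1 (u2 (n+1)) *ᵥ fun _ => 1) = a := by
    intro n
    funext j
    have hden : 0 < (K1 *ᵥ fun k => (u2 (n+1) k)⁻¹) j := by
      simp only [Matrix.mulVec, dotProduct]
      exact Finset.sum_pos
        (fun k _ => mul_pos (hK1pos j k) (inv_pos.mpr ((hpos (n+1)).2.1 k)))
        Finset.univ_nonempty
    have : (indMat1 (u1 (n+1)) K1 (u2 (n+1)) *ᵥ fun _ => 1) j
        = u1 (n+1) j * (K1 *ᵥ fun k => (u2 (n+1) k)⁻¹) j := by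
      simp only [Matrix.mulVec, dotProduct, hE1, mul_one, Finset.mul_sum]
      exact Finset.sum_congr rfl fun k _ => by ring
    rw [this, hrec1]
    exact div_mul_cancel₀ (a j) hden.ne'
  have hmarg2 : ∀ n, ((indMat2 (u2 (n+1)) K2 (u3 (n+1)))ᵀ *ᵥ fun _ => 1) = b := by
    intro n
    funext l
    have hden : 0 < (K2ᵀ *ᵥ u2 (n+1)) l := by
      simp only [Matrix.mulVec, dotProduct, Matrix.transpose_apply]
      exact Finset.sum_pos (fun k _ => mul_pos (hK2pos k l) ((hpos (n+1)).2.1 k))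
        Finset.univ_nonempty
    have : ((indMat2 (u2 (n+1)) K2 (u3 (n+1)))ᵀ *ᵥ fun _ => 1) l
        = u3 (n+1) l * (K2ᵀ *ᵥ u2 (n+1)) l := by
      simp only [Matrix.mulVec, dotProduct, Matrix.transpose_apply, hE2, mul_one,
        Finset.mul_sum]
      exact Finset.sum_congr rfl fun k _ => by ring
    rw [this, hrec3]
    exact div_mul_cancel₀ (b l) hden.ne'
  constructor
  · intro n
    match n with
    | 0 =>
      constructor
      · have : ∀ j k, indMat1 (u1 0) K1 (u2 0) j k = (∑ j, ∑ k, K1 j k)⁻¹ * K1 j k := by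
          intro j k
          rw [hE1, hinit1, hinit2]
          simp [one_div]
        simp only [this, ← Finset.mul_sum]
        exact inv_mul_cancel₀ hK1sum.ne'
      · have : ∀ k l, indMat2 (u2 0) K2 (u3 0) k l = (∑ k, ∑ l, K2 k l)⁻¹ * K2 k l := by
          intro k l
          rw [hE2, hinit2, hinit3]
          simp [one_div]
          ring
        simp only [this, ← Finset.mul_sum]
        exact inv_mul_cancel₀ hK2sum.ne'
    | (m+1) =>
      constructor
      · have h := hmarg1 m
        have : ∀ j, ∑ k, indMat1 (u1 (m+1)) K1 (u2 (m+1)) j k = a j := by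
          intro j
          have := congrFun h j
          simpa [Matrix.mulVec, dotProduct] using this
        simp only [this]
        exact hasum
      · have h := hmarg2 m
        have hcol : ∀ l, ∑ k, indMat2 (u2 (m+1)) K2 (u3 (m+1)) k l = b l := by
          intro l
          have := congrFun h l
          simpa [Matrix.mulVec, dotProduct, Matrix.transpose_apply] using this
        refine (Finset.sum_comm).trans ?_
        simp only [hcol]
        exact hbsum
  · intro n hn
    obtain ⟨m, rfl⟩ := Nat.exists_eq_add_of_le hn
    rw [add_comm]
    exact ⟨hmarg1 m, hmarg2 m⟩
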